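/- Let K be a field and D a division K-algebra such that D ⊗_K D^o is a Noetherian ring. Then for every division K-subalgebra Γ of D, the algebra Γ ⊗_K Γ^o is a Noetherian ring. -/

import Mathlib

open TensorProduct MulOpposite

theorem exists_retraction {E B : Type*} [DivisionRing E] [DivisionRing B] (φ : E →+* B) :
    ∃ g : B →+ E, (∀ e b, g (φ e * b) = e * g b) ∧ g 1 = 1 := by
  letI : Module E B := Module.compHom B φ
  have hsmul : ∀ (e : E) (b : B), e • b = φ e * b := fun _ _ => rfl
  let l : E →ₗ[E] B :=
    { toFun := φ, map_add' := φ.map_add,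
      map_smul' := by intro e e'; simp [hsmul, φ.map_mul, smul_eq_mul] }
  have hinj : LinearMap.ker l = ⊥ := by
    rw [LinearMap.ker_eq_bot]
    exact fun a b hab => φ.injective hab
  obtain ⟨g, hg⟩ := l.exists_leftInverse_of_injective hinj
  have hgφ : ∀ e : E, g (φ e) = e := fun e => congrFun (congrArg DFunLike.coe hg) e
  refine ⟨g.toAddMonoidHom, fun e b => ?_, by simpa using hgφ 1⟩
  have := g.map_smul e b
  simpa [hsmul, smul_eq_mul] using this

set_option maxHeartbeats 2000000 in
set_option synthInstance.maxHeartbeats 200000 in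
/-- Let `D` be a division `K`-algebra with `D ⊗[K] Dᵐᵒᵖ` a Noetherian ring.
Then for every division `K`-subalgebra `Γ` of `D`, the algebra `Γ ⊗[K] Γᵐᵒᵖ` is a
Noetherian ring. -/
theorem stmt12 (K D : Type*) [Field K] [DivisionRing D] [Algebra K D]
    (hNoeth : IsNoetherianRing (D ⊗[K] Dᵐᵒᵖ))
    (Γ : Subalgebra K D) (hΓ : ∀ x ∈ Γ, x ≠ 0 → x⁻¹ ∈ Γ) :
    IsNoetherianRing ((↥Γ) ⊗[K] (↥Γ)ᵐᵒᵖ) := by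
  letI : DivisionRing ↥Γ :=
    { (inferInstance : Ring ↥Γ) with
      inv := fun x => ⟨(x : D)⁻¹, by
        rcases eq_or_ne (x : D) 0 with h | h
        · rw [h, inv_zero]; exact zero_mem Γ
        · exact hΓ x x.2 h⟩
      mul_inv_cancel := fun a ha => by
        ext
        have : (a : D) ≠ 0 := fun h => ha (Subtype.ext h)
        exact mul_inv_cancel₀ this
      inv_zero := by ext; simp
      nnqsmul := _
      qsmul := _ }
  set ψ : (↥Γ)ᵐᵒᵖ →ₐ[K] Dᵐᵒᵖ := AlgHom.op Γ.val with hψdef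
  obtain ⟨q0, hq0, hq01⟩ := exists_retraction Γ.val.toRingHom
  obtain ⟨p0, hp0, hp01⟩ := exists_retraction ψ.toRingHom
  have hval : ∀ e : ↥Γ, Γ.val.toRingHom e = (e : D) := fun _ => rfl
  have hpmul : ∀ (x : D) (e : ↥Γ), unop (p0 (op (x * (e : D)))) = unop (p0 (op x)) * e := by
    intro x e
    have h1 : op (x * (e : D)) = ψ.toRingHom (op e) * op x := rfl
    rw [h1, hp0]
    rfl
  have hqmul : ∀ (y : Dᵐᵒᵖ) (b : (↥Γ)ᵐᵒᵖ), op (q0 (unop (y * ψ b))) = op (q0 (unop y)) * b := by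
    intro y b
    induction b using MulOpposite.rec' with
    | h e =>
      have h1 : unop (y * ψ (op e)) = Γ.val.toRingHom e * unop y := rfl
      rw [h1, hq0]
      rfl
  have hp1 : unop (p0 (op (1 : D))) = 1 := by rw [op_one, hp01]; rfl
  have hq1 : op (q0 (unop (1 : Dᵐᵒᵖ))) = 1 := by rw [unop_one, hq01]; rfl
  -- K-linear versions
  let pL : D →ₗ[K] ↥Γ :=
    { toFun := fun x => unop (p0 (op x))
      map_add' := by
        intro x y
        show unop (p0 (op (x + y))) = unop (p0 (op x)) + unop (p0 (op y))
        rw [op_add, map_add, unop_add]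
      map_smul' := by
        intro k x
        show unop (p0 (op (k • x))) = k • unop (p0 (op x))
        have h1 : k • x = x * ((algebraMap K ↥Γ k : ↥Γ) : D) := by
          rw [Algebra.smul_def, Algebra.commutes]
          congr 1
        rw [h1, hpmul, Algebra.smul_def, Algebra.commutes] }
  let qL : Dᵐᵒᵖ →ₗ[K] (↥Γ)ᵐᵒᵖ :=
    { toFun := fun y => op (q0 (unop y))
      map_add' := by
        intro x y
        show op (q0 (unop (x + y))) = op (q0 (unop x)) + op (q0 (unop y))
        rw [unop_add, map_add, op_add]
      map_smul' := by
        intro k y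
        show op (q0 (unop (k • y))) = k • op (q0 (unop y))
        have h1 : k • y = y * ψ (algebraMap K (↥Γ)ᵐᵒᵖ k) := by
          rw [Algebra.smul_def, Algebra.commutes, AlgHom.commutes]
        rw [h1, hqmul, Algebra.smul_def, Algebra.commutes] }
  let π : (D ⊗[K] Dᵐᵒᵖ) →ₗ[K] ((↥Γ) ⊗[K] (↥Γ)ᵐᵒᵖ) := TensorProduct.map pL qL
  let f : ((↥Γ) ⊗[K] (↥Γ)ᵐᵒᵖ) →+* (D ⊗[K] Dᵐᵒᵖ) :=
    (Algebra.TensorProduct.map Γ.val ψ).toRingHom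
  have hftmul : ∀ (a : ↥Γ) (b : (↥Γ)ᵐᵒᵖ), f (a ⊗ₜ[K] b) = (a : D) ⊗ₜ[K] ψ b := fun _ _ => rfl
  have hπtmul : ∀ (x : D) (y : Dᵐᵒᵖ), π (x ⊗ₜ[K] y) = pL x ⊗ₜ[K] qL y := fun _ _ => rfl
  have hπf : ∀ r, π (f r) = r := by
    intro r
    induction r using TensorProduct.induction_on with
    | zero => rw [map_zero, map_zero]
    | add x y hx hy => rw [map_add, map_add, hx, hy]
    | tmul a b =>
      rw [hftmul, hπtmul]
      have hpa : pL (a : D) = a := by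
        show unop (p0 (op ((a : D)))) = a
        have h : (a : D) = 1 * (a : D) := (one_mul _).symm
        rw [h, hpmul, hp1, one_mul]
      have hqb : qL (ψ b) = b := by
        show op (q0 (unop (ψ b))) = b
        have h : ψ b = 1 * ψ b := (one_mul _).symm
        rw [h, hqmul, hq1, one_mul]
      rw [hpa, hqb]
  have hπmul : ∀ (r : (↥Γ) ⊗[K] (↥Γ)ᵐᵒᵖ) (s : D ⊗[K] Dᵐᵒᵖ), π (s * f r) = π s * r := by
    intro r
    induction r using TensorProduct.induction_on with
    | zero => intro s; rw [map_zero, mul_zero, map_zero, mul_zero]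
    | add x y hx hy => intro s; rw [map_add, mul_add, map_add, mul_add, hx, hy]
    | tmul a b =>
      intro s
      induction s using TensorProduct.induction_on with
      | zero => rw [zero_mul, map_zero, zero_mul]
      | add x y hx hy => rw [add_mul, map_add, map_add, add_mul, hx, hy]
      | tmul x y =>
        have hpL : ∀ x : D, pL x = unop (p0 (op x)) := fun _ => rfl
        have hqL : ∀ y : Dᵐᵒᵖ, qL y = op (q0 (unop y)) := fun _ => rfl
        rw [hftmul, Algebra.TensorProduct.tmul_mul_tmul, hπtmul, hπtmul,
          Algebra.TensorProduct.tmul_mul_tmul, hpL, hpL, hqL, hqL, hpmul, hqmul]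
  -- the ideal map and descent of well-foundedness
  let J : Ideal ((↥Γ) ⊗[K] (↥Γ)ᵐᵒᵖ) → Ideal (D ⊗[K] Dᵐᵒᵖ) :=
    fun I => Submodule.span (D ⊗[K] Dᵐᵒᵖ) (⇑f '' (I : Set ((↥Γ) ⊗[K] (↥Γ)ᵐᵒᵖ)))
  have key : ∀ (I : Ideal ((↥Γ) ⊗[K] (↥Γ)ᵐᵒᵖ)) (x : D ⊗[K] Dᵐᵒᵖ), x ∈ J I →
      ∀ s : D ⊗[K] Dᵐᵒᵖ, π (s * x) ∈ I := by
    intro I x hx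
    induction hx using Submodule.span_induction with
    | mem x hxm =>
      obtain ⟨a, ha, rfl⟩ := hxm
      intro s
      rw [hπmul a s]
      exact I.smul_mem (π s) ha
    | zero => intro s; rw [mul_zero, map_zero]; exact zero_mem I
    | add x y _ _ hx hy => intro s; rw [mul_add, map_add]; exact add_mem (hx s) (hy s)
    | smul t x _ hx =>
      intro s
      have h : s * t • x = (s * t) * x := by rw [smul_eq_mul, mul_assoc]
      rw [h]
      exact hx (s * t)
  have hstrict : ∀ I I' : Ideal ((↥Γ) ⊗[K] (↥Γ)ᵐᵒᵖ), I < I' → J I < J I' := by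
    intro I I' hlt
    have hle : J I ≤ J I' := Submodule.span_mono (Set.image_mono hlt.le)
    refine lt_of_le_of_ne hle (fun heq => ?_)
    refine hlt.ne (le_antisymm hlt.le fun x hx => ?_)
    have hfx : f x ∈ J I := by
      rw [heq]
      exact Submodule.subset_span ⟨x, hx, rfl⟩
    have h2 := key I (f x) hfx 1
    rwa [one_mul, hπf] at h2
  rw [isNoetherianRing_iff, isNoetherian_iff]
  have hwf : WellFounded ((· > ·) : Ideal (D ⊗[K] Dᵐᵒᵖ) → Ideal (D ⊗[K] Dᵐᵒᵖ) → Prop) :=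
    isNoetherian_iff.mp (isNoetherianRing_iff.mp hNoeth)
  exact RelHomClass.wellFounded
    (⟨J, fun {a b} h => hstrict b a h⟩ :
      ((· > ·) : Ideal ((↥Γ) ⊗[K] (↥Γ)ᵐᵒᵖ) → _ → Prop) →r
      ((· > ·) : Ideal (D ⊗[K] Dᵐᵒᵖ) → _ → Prop)) hwf
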